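/- Delivering the mean plan at every fraction is at least as good as any time-varying plan for the CVaR robust model: with a nonempty finite scenario set Ω, probability weights p : Ω → ℝ, p_ω ≥ 0, ∑_{ω∈Ω} p_ω = 1, matrices A(ω) ∈ ℝ^{N×M}, vectors x_0, d ∈ ℝ^N, a symmetric positive semidefinite matrix D ∈ ℝ^{N×N}, a parameter α with 0 < α ≤ 1, any T-tuple of plans (u_0, …, u_{T-1}) in ℝ^M, and ū = (1/T) ∑_{t=0}^{T-1} u_t, define for a tuple U the CVaR objective c(U) = inf_{λ ∈ ℝ} ( λ + (1/α) ∑_{(ω_1,…,ω_T) ∈ Ω^T} (∏_{t=1}^{T} p_{ω_t}) · max(‖x_0 + ∑_{t=0}^{T-1} A(ω_{t+1}) u_t − d‖²_D − λ, 0) ). Then c((ū, …, ū)) ≤ c((u_0, …, u_{T-1})). -/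

import Mathlib

open Matrix

/-- Delivering the mean plan at every fraction is at least as good as any time-varying
plan for the CVaR robust model (Rockafellar–Uryasev functional at level `α`). -/
theorem stmt_8 {N M T : ℕ} (hT : 0 < T) {Ω : Type*} [Fintype Ω] [Nonempty Ω]
    (p : Ω → ℝ) (hp0 : ∀ ω, 0 ≤ p ω) (hp1 : ∑ ω, p ω = 1)
    (A : Ω → Matrix (Fin N) (Fin M) ℝ)
    (x0 d : Fin N → ℝ)
    (D : Matrix (Fin N) (Fin N) ℝ) (hD : D.IsSymm)
    (hpsd : ∀ v : Fin N → ℝ, 0 ≤ v ⬝ᵥ D.mulVec v)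
    (α : ℝ) (hα0 : 0 < α) (hα1 : α ≤ 1)
    (u : Fin T → (Fin M → ℝ)) :
    (⨅ l : ℝ, l + α⁻¹ * ∑ ω : Fin T → Ω, (∏ t, p (ω t)) *
      max (((x0 + ∑ t, (A (ω t)).mulVec ((T : ℝ)⁻¹ • ∑ k, u k) - d) ⬝ᵥ
        D.mulVec (x0 + ∑ t, (A (ω t)).mulVec ((T : ℝ)⁻¹ • ∑ k, u k) - d)) - l) 0)
    ≤ ⨅ l : ℝ, l + α⁻¹ * ∑ ω : Fin T → Ω, (∏ t, p (ω t)) *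
      max (((x0 + ∑ t, (A (ω t)).mulVec (u t) - d) ⬝ᵥ
        D.mulVec (x0 + ∑ t, (A (ω t)).mulVec (u t) - d)) - l) 0 := by
  haveI : NeZero T := ⟨hT.ne'⟩
  have hT0 : (T : ℝ) ≠ 0 := by exact_mod_cast hT.ne'
  -- notation
  set q : (Fin N → ℝ) → ℝ := fun v => v ⬝ᵥ D.mulVec v with hqdef
  have hsym : ∀ x y : Fin N → ℝ, x ⬝ᵥ D.mulVec y = y ⬝ᵥ D.mulVec x := by
    intro x y
    rw [Matrix.dotProduct_mulVec, ← Matrix.mulVec_transpose, hD.eq, dotProduct_comm]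
  -- convexity of the quadratic form
  have hqc : ConvexOn ℝ (Set.univ : Set (Fin N → ℝ)) q := by
    refine ⟨convex_univ, fun x _ y _ a b ha hb hab => ?_⟩
    have hb' : b = 1 - a := by linarith
    have expand : q (a • x + b • y)
        = a ^ 2 * q x + 2 * (a * b) * (x ⬝ᵥ D.mulVec y) + b ^ 2 * q y := by
      simp only [hqdef, Matrix.mulVec_add, Matrix.mulVec_smul, dotProduct_add,
        add_dotProduct, smul_dotProduct, dotProduct_smul, smul_eq_mul]
      rw [hsym y x]; ring
    have expand2 : (x - y) ⬝ᵥ D.mulVec (x - y)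
        = q x - 2 * (x ⬝ᵥ D.mulVec y) + q y := by
      simp only [hqdef, Matrix.mulVec_sub, dotProduct_sub, sub_dotProduct]
      rw [hsym y x]; ring
    have hxy : 0 ≤ q x - 2 * (x ⬝ᵥ D.mulVec y) + q y := expand2 ▸ hpsd (x - y)
    rw [smul_eq_mul, smul_eq_mul, expand]
    subst hb'
    nlinarith [mul_nonneg ha hb, mul_nonneg (mul_nonneg ha hb) hxy]
  -- total weight is 1
  have hwsum : ∑ ω : Fin T → Ω, ∏ t, p (ω t) = 1 := by
    have h := Finset.prod_univ_sum (fun _ : Fin T => (Finset.univ : Finset Ω)) (fun _ ω => p ω)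
    simp [hp1, Fintype.piFinset_univ] at h
    exact h.symm
  have hw0 : ∀ ω : Fin T → Ω, 0 ≤ ∏ t, p (ω t) :=
    fun ω => Finset.prod_nonneg fun t _ => hp0 _
  -- key pointwise (in l) comparison of the expectations
  have key : ∀ l : ℝ,
      (∑ ω : Fin T → Ω, (∏ t, p (ω t)) *
        max (((x0 + ∑ t, (A (ω t)).mulVec ((T : ℝ)⁻¹ • ∑ k, u k) - d) ⬝ᵥ
          D.mulVec (x0 + ∑ t, (A (ω t)).mulVec ((T : ℝ)⁻¹ • ∑ k, u k) - d)) - l) 0)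
      ≤ ∑ ω : Fin T → Ω, (∏ t, p (ω t)) *
        max (((x0 + ∑ t, (A (ω t)).mulVec (u t) - d) ⬝ᵥ
          D.mulVec (x0 + ∑ t, (A (ω t)).mulVec (u t) - d)) - l) 0 := by
    intro l
    set g : (Fin N → ℝ) → ℝ := fun v => max (q (x0 + v - d) - l) 0 with hgdef
    -- convexity of g
    have hgc : ConvexOn ℝ (Set.univ : Set (Fin N → ℝ)) g := by
      have haff : ConvexOn ℝ (Set.univ : Set (Fin N → ℝ))
          (fun v : Fin N → ℝ => q (x0 + v - d) - l) := by
        have h1 := hqc.comp_affineMap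
          (AffineMap.const ℝ (Fin N → ℝ) (x0 - d) + AffineMap.id ℝ (Fin N → ℝ))
        have h2 : ConvexOn ℝ (Set.univ : Set (Fin N → ℝ))
            (fun v : Fin N → ℝ => q (x0 + v - d)) := by
          have heq : (fun v : Fin N → ℝ => q (x0 + v - d))
              = q ∘ ⇑(AffineMap.const ℝ (Fin N → ℝ) (x0 - d) + AffineMap.id ℝ (Fin N → ℝ)) := by
            funext v
            have harg : x0 + v - d = (x0 - d) + v := by abel
            simp [Function.comp, harg]
          rw [heq]
          simpa using h1
        have h3 := h2.add_const (-l)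
        have heq2 : (fun v : Fin N → ℝ => q (x0 + v - d) - l)
            = (fun v : Fin N → ℝ => q (x0 + v - d)) + fun _ => -l := by
          funext v; simp [sub_eq_add_neg]
        rw [heq2]
        exact h3
      have : g = (fun v : Fin N → ℝ => q (x0 + v - d) - l) ⊔ (fun _ => (0 : ℝ)) := by
        funext v
        simp [hgdef, Pi.sup_apply]
      rw [this]
      exact haff.sup (convexOn_const 0 convex_univ)
    -- Jensen for uniform averages of T points
    have jensen : ∀ z : Fin T → (Fin N → ℝ),
        g (∑ j, (T : ℝ)⁻¹ • z j) ≤ ∑ j, (T : ℝ)⁻¹ * g (z j) := by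
      intro z
      refine hgc.map_sum_le (fun i _ => by positivity) ?_ (fun i _ => Set.mem_univ _)
      rw [Finset.sum_const, Finset.card_univ, Fintype.card_fin, nsmul_eq_mul,
        mul_inv_cancel₀ hT0]
    -- the time-varying dose vector
    set v : (Fin T → Ω) → (Fin N → ℝ) := fun ω => ∑ t, (A (ω t)).mulVec (u t) with hvdef
    -- the mean-plan dose is the uniform average of doses along cyclic shifts
    have hvbar : ∀ ω : Fin T → Ω,
        ∑ t, (A (ω t)).mulVec ((T : ℝ)⁻¹ • ∑ k, u k)
        = ∑ j : Fin T, (T : ℝ)⁻¹ • v (fun t => ω (t + j)) := by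
      intro ω
      calc ∑ t, (A (ω t)).mulVec ((T : ℝ)⁻¹ • ∑ k, u k)
          = (T : ℝ)⁻¹ • ∑ t, ∑ k, (A (ω t)).mulVec (u k) := by
            simp only [Matrix.mulVec_smul]
            rw [← Finset.smul_sum]
            congr 1
            refine Finset.sum_congr rfl fun t _ => ?_
            exact map_sum (A (ω t)).mulVecLin u Finset.univ
        _ = (T : ℝ)⁻¹ • ∑ t, ∑ j, (A (ω (t + j))).mulVec (u t) := by
            rw [Finset.sum_comm]
            congr 1
            refine Finset.sum_congr rfl fun t _ => ?_
            exact (Fintype.sum_equiv (Equiv.addLeft t)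
              (fun j => (A (ω (t + j))).mulVec (u t))
              (fun s => (A (ω s)).mulVec (u t)) fun j => rfl).symm
        _ = ∑ j : Fin T, (T : ℝ)⁻¹ • v (fun t => ω (t + j)) := by
            simp only [hvdef]
            rw [← Finset.smul_sum, Finset.sum_comm]
    -- Jensen per scenario
    have step : ∀ ω : Fin T → Ω,
        g (∑ t, (A (ω t)).mulVec ((T : ℝ)⁻¹ • ∑ k, u k))
        ≤ ∑ j : Fin T, (T : ℝ)⁻¹ * g (v (fun t => ω (t + j))) := by
      intro ω
      rw [hvbar ω]
      exact jensen _
    have goal' :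
        ∑ ω : Fin T → Ω, (∏ t, p (ω t)) *
          g (∑ t, (A (ω t)).mulVec ((T : ℝ)⁻¹ • ∑ k, u k))
        ≤ ∑ ω : Fin T → Ω, (∏ t, p (ω t)) * g (v ω) := by
      calc ∑ ω : Fin T → Ω, (∏ t, p (ω t)) *
            g (∑ t, (A (ω t)).mulVec ((T : ℝ)⁻¹ • ∑ k, u k))
          ≤ ∑ ω : Fin T → Ω, (∏ t, p (ω t)) *
              ∑ j : Fin T, (T : ℝ)⁻¹ * g (v (fun t => ω (t + j))) :=
            Finset.sum_le_sum fun ω _ =>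
              mul_le_mul_of_nonneg_left (step ω) (hw0 ω)
        _ = ∑ j : Fin T, (T : ℝ)⁻¹ *
              ∑ ω : Fin T → Ω, (∏ t, p (ω t)) * g (v (fun t => ω (t + j))) := by
            simp only [Finset.mul_sum]
            rw [Finset.sum_comm]
            refine Finset.sum_congr rfl fun j _ => ?_
            exact Finset.sum_congr rfl fun ω _ => by ring
        _ = ∑ j : Fin T, (T : ℝ)⁻¹ *
              ∑ ω : Fin T → Ω, (∏ t, p (ω t)) * g (v ω) := by
            refine Finset.sum_congr rfl fun j _ => ?_
            congr 1
            refine Fintype.sum_equiv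
              (Equiv.arrowCongr (Equiv.addRight j).symm (Equiv.refl Ω)) _ _ fun ω => ?_
            have hw : (∏ t, p (ω (t + j))) = ∏ t, p (ω t) :=
              Fintype.prod_equiv (Equiv.addRight j) _ _ fun t => rfl
            have hE : (Equiv.arrowCongr (Equiv.addRight j).symm (Equiv.refl Ω)) ω
                = fun t => ω (t + j) := rfl
            rw [hE, hw]
        _ = ∑ ω : Fin T → Ω, (∏ t, p (ω t)) * g (v ω) := by
            rw [Finset.sum_const, Finset.card_univ, Fintype.card_fin, nsmul_eq_mul,
              ← mul_assoc, mul_inv_cancel₀ hT0, one_mul]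
    exact goal'
  -- lower bound 0 for the CVaR objective of the mean plan
  have lb : ∀ l : ℝ,
      0 ≤ l + α⁻¹ * ∑ ω : Fin T → Ω, (∏ t, p (ω t)) *
        max (((x0 + ∑ t, (A (ω t)).mulVec ((T : ℝ)⁻¹ • ∑ k, u k) - d) ⬝ᵥ
          D.mulVec (x0 + ∑ t, (A (ω t)).mulVec ((T : ℝ)⁻¹ • ∑ k, u k) - d)) - l) 0 := by
    intro l
    set S := ∑ ω : Fin T → Ω, (∏ t, p (ω t)) *
        max (((x0 + ∑ t, (A (ω t)).mulVec ((T : ℝ)⁻¹ • ∑ k, u k) - d) ⬝ᵥ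
          D.mulVec (x0 + ∑ t, (A (ω t)).mulVec ((T : ℝ)⁻¹ • ∑ k, u k) - d)) - l) 0 with hSdef
    have hS0 : 0 ≤ S :=
      Finset.sum_nonneg fun ω _ => mul_nonneg (hw0 ω) (le_max_right _ _)
    have hαinv : 1 ≤ α⁻¹ := (one_le_inv_iff₀.mpr ⟨hα0, hα1⟩)
    rcases le_or_gt 0 l with h | h
    · have : 0 ≤ α⁻¹ * S := mul_nonneg (by positivity) hS0
      linarith
    · have hSl : -l ≤ S := by
        have h1 : -l = ∑ ω : Fin T → Ω, (∏ t, p (ω t)) * (-l) := by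
          rw [← Finset.sum_mul, hwsum, one_mul]
        rw [h1, hSdef]
        refine Finset.sum_le_sum fun ω _ => ?_
        refine mul_le_mul_of_nonneg_left ?_ (hw0 ω)
        have := hpsd (x0 + ∑ t, (A (ω t)).mulVec ((T : ℝ)⁻¹ • ∑ k, u k) - d)
        exact le_trans (by linarith) (le_max_left _ _)
      have h2 : S ≤ α⁻¹ * S := le_mul_of_one_le_left hS0 hαinv
      linarith
  refine ciInf_mono ⟨0, ?_⟩ fun l => ?_
  · rintro x ⟨l, rfl⟩
    exact lb l
  · have h := mul_le_mul_of_nonneg_left (key l) (inv_nonneg.mpr hα0.le)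
    linarith
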